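/- Let G be a (pan, even hole)-free graph, B an odd ℓ-buoy in G (ℓ ≥ 5), and x a vertex outside B. If x has a neighbor in B_{i-1} and a neighbor in B_{i+1}, then x is adjacent to every vertex of B_i. -/

import Mathlib

def IsHole {V : Type*} (G : SimpleGraph V) (n : ℕ) (f : ZMod n → V) : Prop :=
  4 ≤ n ∧ Function.Injective f ∧
    ∀ i j : ZMod n, G.Adj (f i) (f j) ↔ (j = i + 1 ∨ i = j + 1)

def HasInducedPan {V : Type*} (G : SimpleGraph V) : Prop :=
  ∃ (n : ℕ) (f : ZMod n → V) (x : V),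
    IsHole G n f ∧ x ∉ Set.range f ∧ ∃! i : ZMod n, G.Adj x (f i)

def HasEvenHole {V : Type*} (G : SimpleGraph V) : Prop :=
  ∃ (n : ℕ) (f : ZMod n → V), IsHole G n f ∧ Even n

def IsBuoy {V : Type*} (G : SimpleGraph V) (ℓ : ℕ) (B : ZMod ℓ → Set V) : Prop :=
  5 ≤ ℓ ∧
  (∀ i, (B i).Nonempty) ∧
  (∀ i, G.IsClique (B i)) ∧
  (Pairwise fun i j => Disjoint (B i) (B j)) ∧
  (∀ i, ∀ v ∈ B i, ∃ u ∈ B (i + 1), G.Adj v u) ∧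
  (∀ i, ∀ v ∈ B i, ∃ u ∈ B (i - 1), G.Adj v u) ∧
  (∀ i j : ZMod ℓ, j ≠ i → j ≠ i + 1 → j ≠ i - 1 →
    ∀ v ∈ B i, ∀ u ∈ B j, ¬ G.Adj v u)

section Helpers
variable {V : Type*} {G : SimpleGraph V}

lemma isHole_mk (n : ℕ) (hn : 4 ≤ n) (F : ℕ → V)
    (hinj : ∀ s t, s < t → t < n → F s ≠ F t)
    (hadj : ∀ t, t + 1 < n → G.Adj (F t) (F (t+1)))
    (hlast : G.Adj (F (n-1)) (F 0))
    (hnadj : ∀ s t, s < t → t < n → t ≠ s + 1 → ¬(s = 0 ∧ t = n-1) →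
      ¬ G.Adj (F s) (F t)) :
    IsHole G n (fun m : ZMod n => F m.val) := by
  haveI : NeZero n := ⟨by omega⟩
  haveI : Fact (1 < n) := ⟨by omega⟩
  have hvadd : ∀ r : ZMod n, (r+1).val = (r.val+1) % n := by
    intro r; rw [ZMod.val_add, ZMod.val_one]
  refine ⟨hn, ?_, ?_⟩
  · intro p q h
    by_contra hne
    have hpq : p.val ≠ q.val := fun h' => hne (ZMod.val_injective _ h')
    have hp := ZMod.val_lt p; have hq := ZMod.val_lt q
    rcases lt_or_gt_of_ne hpq with h' | h'
    · exact hinj _ _ h' hq h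
    · exact hinj _ _ h' hp h.symm
  · intro p q
    have hp := ZMod.val_lt p; have hq := ZMod.val_lt q
    constructor
    · intro hadj'
      by_contra hcon
      push_neg at hcon
      obtain ⟨h1, h2⟩ := hcon
      have hne : p ≠ q := by rintro rfl; exact G.loopless.irrefl _ hadj'
      have hnev : p.val ≠ q.val := fun h => hne (ZMod.val_injective _ h)
      rcases lt_or_gt_of_ne hnev with h' | h'
      · refine hnadj _ _ h' hq ?_ ?_ hadj'
        · intro h
          apply h1
          apply ZMod.val_injective
          rw [hvadd, ← h, Nat.mod_eq_of_lt hq]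
        · rintro ⟨hp0, hq1⟩
          apply h2
          apply ZMod.val_injective
          rw [hvadd, hq1, Nat.sub_add_cancel (by omega), Nat.mod_self, hp0]
      · refine hnadj _ _ h' hp ?_ ?_ hadj'.symm
        · intro h
          apply h2
          apply ZMod.val_injective
          rw [hvadd, ← h, Nat.mod_eq_of_lt hp]
        · rintro ⟨hq0, hp1⟩
          apply h1
          apply ZMod.val_injective
          rw [hvadd, hp1, Nat.sub_add_cancel (by omega), Nat.mod_self, hq0]
    · intro h
      rcases h with h | h
      · subst h
        show G.Adj (F p.val) (F (p+1).val)
        rw [hvadd]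
        rcases Nat.lt_or_ge (p.val + 1) n with h' | h'
        · rw [Nat.mod_eq_of_lt h']; exact hadj _ h'
        · have hpv : p.val = n - 1 := by omega
          rw [hpv, Nat.sub_add_cancel (by omega), Nat.mod_self]; exact hlast
      · subst h
        show G.Adj (F (q+1).val) (F q.val)
        rw [hvadd]
        rcases Nat.lt_or_ge (q.val + 1) n with h' | h'
        · rw [Nat.mod_eq_of_lt h']; exact (hadj _ h').symm
        · have hqv : q.val = n - 1 := by omega
          rw [hqv, Nat.sub_add_cancel (by omega), Nat.mod_self]; exact hlast.symm

lemma evenHole_mk (n : ℕ) (hn : 4 ≤ n) (hev : Even n) (F : ℕ → V)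
    (hinj : ∀ s t, s < t → t < n → F s ≠ F t)
    (hadj : ∀ t, t + 1 < n → G.Adj (F t) (F (t+1)))
    (hlast : G.Adj (F (n-1)) (F 0))
    (hnadj : ∀ s t, s < t → t < n → t ≠ s + 1 → ¬(s = 0 ∧ t = n-1) →
      ¬ G.Adj (F s) (F t)) :
    HasEvenHole G :=
  ⟨n, _, isHole_mk n hn F hinj hadj hlast hnadj, hev⟩

lemma pan_mk (n : ℕ) (hn : 4 ≤ n) (F : ℕ → V)
    (hinj : ∀ s t, s < t → t < n → F s ≠ F t)
    (hadj : ∀ t, t + 1 < n → G.Adj (F t) (F (t+1)))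
    (hlast : G.Adj (F (n-1)) (F 0))
    (hnadj : ∀ s t, s < t → t < n → t ≠ s + 1 → ¬(s = 0 ∧ t = n-1) →
      ¬ G.Adj (F s) (F t))
    (y : V) (hy : ∀ t, t < n → y ≠ F t)
    (t0 : ℕ) (ht0 : t0 < n) (hadjy : G.Adj y (F t0))
    (huniq : ∀ t, t < n → t ≠ t0 → ¬ G.Adj y (F t)) :
    HasInducedPan G := by
  haveI : NeZero n := ⟨by omega⟩
  refine ⟨n, _, y, isHole_mk n hn F hinj hadj hlast hnadj, ?_, ?_⟩
  · rintro ⟨m, hm⟩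
    exact hy m.val (ZMod.val_lt m) hm.symm
  · refine ⟨(t0 : ZMod n), ?_, ?_⟩
    · simpa [ZMod.val_cast_of_lt ht0] using hadjy
    · intro j hj
      have hjv : j.val = t0 := by
        by_contra hne
        exact huniq j.val (ZMod.val_lt j) hne hj
      rw [← hjv]
      exact (ZMod.natCast_rightInverse j).symm

end Helpers
section BuoyHelpers
variable {V : Type*} {G : SimpleGraph V} {ℓ : ℕ} {B : ZMod ℓ → Set V}

lemma natCast_eq_iff (hl : 5 ≤ ℓ) (s t : ℕ) : ((s : ZMod ℓ) = (t : ZMod ℓ)) ↔ s % ℓ = t % ℓ :=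
  (ZMod.natCast_eq_natCast_iff s t ℓ)

lemma buoy_nadj (hB : IsBuoy G ℓ B) (i : ZMod ℓ) (s t : ℕ) (u v : V)
    (hu : u ∈ B (i + (s : ℕ))) (hv : v ∈ B (i + (t : ℕ)))
    (h1 : t % ℓ ≠ s % ℓ) (h2 : t % ℓ ≠ (s+1) % ℓ) (h3 : (t+1) % ℓ ≠ s % ℓ) :
    ¬ G.Adj u v := by
  have hl := hB.1
  refine hB.2.2.2.2.2.2 (i + s) (i + t) ?_ ?_ ?_ u hu v hv
  · intro h
    exact h1 ((natCast_eq_iff hl t s).1 (by exact add_left_cancel h))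
  · intro h
    apply h2
    refine (natCast_eq_iff hl t (s+1)).1 ?_
    have : (i : ZMod ℓ) + t = i + ((s:ℕ) + 1) := by rw [h]; ring
    have := add_left_cancel this
    rw [this]; push_cast; ring
  · intro h
    apply h3
    refine (natCast_eq_iff hl (t+1) s).1 ?_
    have : (i : ZMod ℓ) + ((t:ℕ) + 1) = i + s := by rw [show ((t:ℕ):ZMod ℓ) + 1 = (i + t + 1) - i by ring, h]; ring
    have := add_left_cancel this
    rw [← this]; push_cast; ring

lemma buoy_ne (hB : IsBuoy G ℓ B) (i : ZMod ℓ) (s t : ℕ) (u v : V)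
    (hu : u ∈ B (i + (s : ℕ))) (hv : v ∈ B (i + (t : ℕ)))
    (h1 : s % ℓ ≠ t % ℓ) : u ≠ v := by
  rintro rfl
  have hne : i + (s:ℕ) ≠ i + (t:ℕ) := by
    intro h
    exact h1 ((natCast_eq_iff hB.1 s t).1 (add_left_cancel h))
  exact Set.disjoint_left.1 (hB.2.2.2.1 hne) hu hv

lemma buoy_xne {x : V} (hx : x ∉ ⋃ j, B j) (p : ZMod ℓ) (u : V) (hu : u ∈ B p) : x ≠ u := by
  rintro rfl
  exact hx (Set.mem_iUnion.2 ⟨p, hu⟩)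

-- the greedy chain
lemma buoy_chain (hB : IsBuoy G ℓ B) (i : ZMod ℓ) (c' : V) (hc' : c' ∈ B (i + (1:ℕ))) :
    ∀ m : ℕ, m + 3 ≤ ℓ → ∃ w : ℕ → V, w 1 = c' ∧
      (∀ t, 1 ≤ t → t ≤ m + 1 → w t ∈ B (i + (t:ℕ))) ∧
      (∀ t, 1 ≤ t → t ≤ m → G.Adj (w t) (w (t+1))) := by
  intro m
  induction m with
  | zero =>
    intro _
    refine ⟨fun _ => c', rfl, ?_, ?_⟩
    · intro t h1 h2
      have : t = 1 := by omega
      subst this; exact hc'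
    · intro t h1 h2; omega
  | succ m ih =>
    intro hm
    obtain ⟨w, hw1, hwmem, hwadj⟩ := ih (by omega)
    obtain ⟨u, hu, hadju⟩ := hB.2.2.2.2.1 (i + ((m+1:ℕ):ZMod ℓ)) (w (m+1))
      (hwmem (m+1) (by omega) le_rfl)
    refine ⟨fun t => if t = m+2 then u else w t, ?_, ?_, ?_⟩
    · simp [show (1:ℕ) ≠ m+2 by omega, hw1]
    · intro t h1 h2
      by_cases ht : t = m+2
      · subst ht
        simp only [if_pos rfl, ↓reduceIte]
        convert hu using 2
        push_cast; ring
      · simp only [if_neg ht]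
        exact hwmem t h1 (by omega)
    · intro t h1 h2
      by_cases ht : t = m+1
      · subst ht
        simp only [if_neg (show m+1 ≠ m+2 by omega), if_pos rfl]
        exact hadju
      · simp only [if_neg (show t ≠ m+2 by omega), if_neg (show t+1 ≠ m+2 by omega)]
        exact hwadj t h1 (by omega)

end BuoyHelpers

section BuoyHelpers2
variable {V : Type*} {G : SimpleGraph V} {ℓ : ℕ} {B : ZMod ℓ → Set V}

lemma buoy_nadj' (hB : IsBuoy G ℓ B) (i : ZMod ℓ) (s t : ℕ) (hs : s < ℓ) (ht : t < ℓ)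
    (u v : V) (hu : u ∈ B (i + (s : ℕ))) (hv : v ∈ B (i + (t : ℕ)))
    (h1 : t ≠ s)
    (h2 : ¬(t = s + 1 ∨ (s = ℓ - 1 ∧ t = 0)))
    (h3 : ¬(s = t + 1 ∨ (t = ℓ - 1 ∧ s = 0))) : ¬ G.Adj u v := by
  have hl := hB.1
  refine buoy_nadj hB i s t u v hu hv ?_ ?_ ?_
  · rw [Nat.mod_eq_of_lt ht, Nat.mod_eq_of_lt hs]; exact h1
  · rw [Nat.mod_eq_of_lt ht]
    rcases Nat.lt_or_ge (s+1) ℓ with h | h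
    · rw [Nat.mod_eq_of_lt h]; intro hh; exact h2 (Or.inl hh)
    · have hsv : s = ℓ - 1 := by omega
      rw [show s + 1 = ℓ by omega, Nat.mod_self]
      intro hh; exact h2 (Or.inr ⟨hsv, hh⟩)
  · rw [Nat.mod_eq_of_lt hs]
    rcases Nat.lt_or_ge (t+1) ℓ with h | h
    · rw [Nat.mod_eq_of_lt h]; intro hh; exact h3 (Or.inl hh.symm)
    · have htv : t = ℓ - 1 := by omega
      rw [show t + 1 = ℓ by omega, Nat.mod_self]
      intro hh; exact h3 (Or.inr ⟨htv, hh.symm⟩)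

lemma buoy_ne' (hB : IsBuoy G ℓ B) (i : ZMod ℓ) (s t : ℕ) (hs : s < ℓ) (ht : t < ℓ)
    (u v : V) (hu : u ∈ B (i + (s : ℕ))) (hv : v ∈ B (i + (t : ℕ)))
    (h1 : s ≠ t) : u ≠ v :=
  buoy_ne hB i s t u v hu hv (by rw [Nat.mod_eq_of_lt ht, Nat.mod_eq_of_lt hs]; exact h1)

lemma buoy_reflect (hB : IsBuoy G ℓ B) (i : ZMod ℓ) :
    IsBuoy G ℓ (fun j => B (i + i - j)) := by
  obtain ⟨hl, hne, hclq, hdisj, hfwd, hbwd, hnad⟩ := hB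
  refine ⟨hl, fun j => hne _, fun j => hclq _, ?_, ?_, ?_, ?_⟩
  · intro p q hpq
    exact hdisj (fun h => hpq (by linear_combination -h))
  · intro j v hv
    obtain ⟨u, hu, hadj⟩ := hbwd _ v hv
    refine ⟨u, ?_, hadj⟩
    show u ∈ B (i + i - (j + 1))
    rw [show i + i - (j+1) = i + i - j - 1 by ring]; exact hu
  · intro j v hv
    obtain ⟨u, hu, hadj⟩ := hfwd _ v hv
    refine ⟨u, ?_, hadj⟩
    show u ∈ B (i + i - (j - 1))
    rw [show i + i - (j-1) = i + i - j + 1 by ring]; exact hu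
  · intro p q h1 h2 h3 v hv u hu
    refine hnad (i + i - p) (i + i - q) ?_ ?_ ?_ v hv u hu
    · intro h; exact h1 (by linear_combination -h)
    · intro h; exact h3 (by linear_combination -h)
    · intro h; exact h2 (by linear_combination -h)

end BuoyHelpers2

section Helpers2
variable {V : Type*} {G : SimpleGraph V}

lemma pan_mk2 (n : ℕ) (hn : 4 ≤ n) (F : ℕ → V)
    (hhole : IsHole G n (fun m : ZMod n => F m.val))
    (y : V) (hy : ∀ t, t < n → y ≠ F t)
    (t0 : ℕ) (ht0 : t0 < n) (hadjy : G.Adj y (F t0))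
    (huniq : ∀ t, t < n → t ≠ t0 → ¬ G.Adj y (F t)) :
    HasInducedPan G := by
  haveI : NeZero n := ⟨by omega⟩
  refine ⟨n, _, y, hhole, ?_, ?_⟩
  · rintro ⟨m, hm⟩
    exact hy m.val (ZMod.val_lt m) hm.symm
  · refine ⟨(t0 : ZMod n), ?_, ?_⟩
    · simpa [ZMod.val_cast_of_lt ht0] using hadjy
    · intro j hj
      have hjv : j.val = t0 := by
        by_contra hne
        exact huniq j.val (ZMod.val_lt j) hne hj
      rw [← hjv]
      exact (ZMod.natCast_rightInverse j).symm

end Helpers2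


set_option maxHeartbeats 2000000 in
lemma buoy_main {V : Type*} (G : SimpleGraph V)
    (hpan : ¬ HasInducedPan G) (heven : ¬ HasEvenHole G)
    (ℓ : ℕ) (hodd : Odd ℓ) (B : ZMod ℓ → Set V) (hB : IsBuoy G ℓ B)
    (x : V) (hx : x ∉ ⋃ j, B j) (i : ZMod ℓ)
    (b : V) (hb : b ∈ B i) (hxb : ¬ G.Adj x b)
    (a : V) (ha : a ∈ B (i-1)) (hxa : G.Adj x a) (hab : G.Adj a b)
    (c : V) (hc : c ∈ B (i+1)) (hxc : G.Adj x c) : False := by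
  have hl : 5 ≤ ℓ := hB.1
  haveI : NeZero ℓ := ⟨by omega⟩
  have hlodd : ℓ % 2 = 1 := Nat.odd_iff.1 hodd
  have eL1 : ((ℓ-1:ℕ) : ZMod ℓ) = -1 := by
    rw [Nat.cast_sub (by omega : 1 ≤ ℓ), ZMod.natCast_self, Nat.cast_one]; ring
  have eL2 : ((ℓ-2:ℕ) : ZMod ℓ) = -2 := by
    rw [Nat.cast_sub (by omega : 2 ≤ ℓ), ZMod.natCast_self]; push_cast; ring
  have hmb : b ∈ B (i + ((0:ℕ):ZMod ℓ)) := by simpa using hb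
  have hma : a ∈ B (i + ((ℓ-1:ℕ):ZMod ℓ)) := by
    rw [eL1, show i + (-1 : ZMod ℓ) = i - 1 by ring]; exact ha
  have hmc : c ∈ B (i + ((1:ℕ):ZMod ℓ)) := by simpa using hc
  obtain ⟨c', hmc'0, hbc'⟩ := hB.2.2.2.2.1 i b hb
  have hmc' : c' ∈ B (i + ((1:ℕ):ZMod ℓ)) := by simpa using hmc'0
  have hxneq := buoy_xne hx
  -- 4-hole killer: u ∈ B(i+1), b~u, x~u is impossible
  have h4 : ∀ u, u ∈ B (i + ((1:ℕ):ZMod ℓ)) → G.Adj b u → G.Adj x u → False := by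
    intro u hu hbu hxu
    apply heven
    refine evenHole_mk 4 le_rfl (by decide)
      (fun t => if t = 0 then x else if t = 1 then a else if t = 2 then b else u)
      ?_ ?_ ?_ ?_
    · intro s t hst htn
      interval_cases t <;> interval_cases s <;> norm_num <;>
      first
        | exact hxneq _ a hma
        | exact hxneq _ b hmb
        | exact hxneq _ u hu
        | exact buoy_ne' hB i (ℓ-1) 0 (by omega) (by omega) a b hma hmb (by omega)
        | exact buoy_ne' hB i (ℓ-1) 1 (by omega) (by omega) a u hma hu (by omega)
        | exact buoy_ne' hB i 0 1 (by omega) (by omega) b u hmb hu (by omega)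
    · intro t htn
      have ht : t < 3 := by omega
      interval_cases t <;> norm_num <;>
      first
        | exact hxa
        | exact hab
        | exact hbu
    · norm_num; exact hxu.symm
    · intro s t hst htn hts hex
      interval_cases t <;> interval_cases s <;> try omega
      all_goals norm_num
      all_goals first
        | exact hxb
        | exact buoy_nadj' hB i (ℓ-1) 1 (by omega) (by omega) a u hma hu
            (by omega) (by omega) (by omega)
  have hxc' : ¬ G.Adj x c' := fun h => h4 c' hmc' hbc' h
  have hbc : ¬ G.Adj b c := fun h => h4 c hmc h hxc
  have hcc' : c ≠ c' := fun h => hxc' (h ▸ hxc)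
  have hc'c : G.Adj c' c := hB.2.2.1 (i+1) hmc'0 hc hcc'.symm
  -- the 5-hole H = (x, a, b, c', c)
  have hH : IsHole G 5 (fun m : ZMod 5 =>
      (fun t => if t = 0 then x else if t = 1 then a else if t = 2 then b
        else if t = 3 then c' else c) m.val) := by
    refine isHole_mk 5 (by omega)
      (fun t => if t = 0 then x else if t = 1 then a else if t = 2 then b
        else if t = 3 then c' else c) ?_ ?_ ?_ ?_
    · intro s t hst htn
      interval_cases t <;> interval_cases s <;> norm_num <;>
      first
        | exact hxneq _ a hma
        | exact hxneq _ b hmb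
        | exact hxneq _ c' hmc'
        | exact hxneq _ c hmc
        | exact buoy_ne' hB i (ℓ-1) 0 (by omega) (by omega) a b hma hmb (by omega)
        | exact buoy_ne' hB i (ℓ-1) 1 (by omega) (by omega) a c' hma hmc' (by omega)
        | exact buoy_ne' hB i (ℓ-1) 1 (by omega) (by omega) a c hma hmc (by omega)
        | exact buoy_ne' hB i 0 1 (by omega) (by omega) b c' hmb hmc' (by omega)
        | exact buoy_ne' hB i 0 1 (by omega) (by omega) b c hmb hmc (by omega)
        | exact hcc'.symm
    · intro t htn
      have ht : t < 4 := by omega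
      interval_cases t <;> norm_num <;>
      first
        | exact hxa
        | exact hab
        | exact hbc'
        | exact hc'c
    · norm_num; exact hxc.symm
    · intro s t hst htn hts hex
      interval_cases t <;> interval_cases s <;> try omega
      all_goals norm_num
      all_goals first
        | exact hxb
        | exact hxc'
        | exact hbc
        | exact buoy_nadj' hB i (ℓ-1) 1 (by omega) (by omega) a c' hma hmc'
            (by omega) (by omega) (by omega)
        | exact buoy_nadj' hB i (ℓ-1) 1 (by omega) (by omega) a c hma hmc
            (by omega) (by omega) (by omega)
  -- Fact 1 : every neighbour of a in B(i-2) is a neighbour of x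
  have fact1 : ∀ d, d ∈ B (i + ((ℓ-2:ℕ):ZMod ℓ)) → G.Adj a d → G.Adj x d := by
    intro d hd had
    by_contra hxd
    apply hpan
    refine pan_mk2 5 (by omega)
      (fun t => if t = 0 then x else if t = 1 then a else if t = 2 then b
        else if t = 3 then c' else c) hH d ?_ 1 (by omega) ?_ ?_
    · intro t htn
      interval_cases t <;> norm_num <;>
      first
        | exact (hxneq _ d hd).symm
        | exact buoy_ne' hB i (ℓ-2) (ℓ-1) (by omega) (by omega) d a hd hma (by omega)
        | exact buoy_ne' hB i (ℓ-2) 0 (by omega) (by omega) d b hd hmb (by omega)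
        | exact buoy_ne' hB i (ℓ-2) 1 (by omega) (by omega) d c' hd hmc' (by omega)
        | exact buoy_ne' hB i (ℓ-2) 1 (by omega) (by omega) d c hd hmc (by omega)
    · norm_num; exact had.symm
    · intro t htn hne
      interval_cases t <;> try omega
      all_goals norm_num
      all_goals first
        | exact fun h => hxd h.symm
        | exact buoy_nadj' hB i (ℓ-2) 0 (by omega) (by omega) d b hd hmb
            (by omega) (by omega) (by omega)
        | exact buoy_nadj' hB i (ℓ-2) 1 (by omega) (by omega) d c' hd hmc'
            (by omega) (by omega) (by omega)
        | exact buoy_nadj' hB i (ℓ-2) 1 (by omega) (by omega) d c hd hmc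
            (by omega) (by omega) (by omega)
  -- the greedy chain w : B(i+1) ... B(i+(l-2))
  obtain ⟨w, hw1, hwm0, hwa0⟩ := buoy_chain hB i c' hmc' (ℓ-3) (by omega)
  have hwm : ∀ t, 1 ≤ t → t ≤ ℓ-2 → w t ∈ B (i + (t:ℕ)) := fun t h1 h2 => hwm0 t h1 (by omega)
  have hwadj : ∀ t, 1 ≤ t → t ≤ ℓ-3 → G.Adj (w t) (w (t+1)) := fun t h1 h2 => hwa0 t h1 (by omega)
  obtain ⟨d0, hd00, had0⟩ := hB.2.2.2.2.2.1 (i-1) a ha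
  have hd0 : d0 ∈ B (i + ((ℓ-2:ℕ):ZMod ℓ)) := by
    rw [eL2, show i + (-2:ZMod ℓ) = i - 1 - 1 by ring]; exact hd00
  have hxd0 : G.Adj x d0 := fact1 d0 hd0 had0
  have hwchain : G.Adj (w (ℓ-3)) (w (ℓ-2)) := by
    have := hwadj (ℓ-3) (by omega) le_rfl
    rwa [show ℓ-3+1 = ℓ-2 by omega] at this
  -- get the final corner kk of the hole K
  have hKK : ∃ kk, kk ∈ B (i + ((ℓ-2:ℕ):ZMod ℓ)) ∧ G.Adj kk a ∧ G.Adj x kk ∧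
      G.Adj (w (ℓ-3)) kk := by
    by_cases hwa2 : G.Adj (w (ℓ-2)) a
    · exact ⟨w (ℓ-2), hwm (ℓ-2) (by omega) le_rfl, hwa2,
        fact1 _ (hwm (ℓ-2) (by omega) le_rfl) hwa2.symm, hwchain⟩
    · by_cases hwd : G.Adj (w (ℓ-3)) d0
      · exact ⟨d0, hd0, had0.symm, hxd0, hwd⟩
      · exfalso
        apply heven
        have hwdne : w (ℓ-2) ≠ d0 := fun h => hwa2 (h ▸ had0.symm)
        refine evenHole_mk (ℓ+1) (by omega) (by rw [Nat.even_iff]; omega)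
          (fun t => if t = 0 then b else if t ≤ ℓ-2 then w t else if t = ℓ-1 then d0 else a)
          ?_ ?_ ?_ ?_
        · intro s t hst htn
          beta_reduce
          by_cases ht2 : t ≤ ℓ-2
          · rw [if_neg (by omega : ¬ t = 0), if_pos ht2]
            by_cases hs0 : s = 0
            · subst hs0
              rw [if_pos rfl]
              exact buoy_ne' hB i 0 t (by omega) (by omega) b (w t) hmb
                (hwm t (by omega) ht2) (by omega)
            · rw [if_neg hs0, if_pos (by omega : s ≤ ℓ-2)]
              exact buoy_ne' hB i s t (by omega) (by omega) _ _
                (hwm s (by omega) (by omega)) (hwm t (by omega) ht2) (by omega)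
          · by_cases htl : t = ℓ-1
            · subst htl
              rw [if_neg (by omega : ¬ (ℓ-1) = 0), if_neg (by omega : ¬ ℓ-1 ≤ ℓ-2), if_pos rfl]
              by_cases hs0 : s = 0
              · subst hs0; rw [if_pos rfl]
                exact buoy_ne' hB i 0 (ℓ-2) (by omega) (by omega) b d0 hmb hd0 (by omega)
              · rw [if_neg hs0, if_pos (by omega : s ≤ ℓ-2)]
                by_cases hsl : s = ℓ-2
                · subst hsl; exact hwdne
                · exact buoy_ne' hB i s (ℓ-2) (by omega) (by omega) _ _
                    (hwm s (by omega) (by omega)) hd0 (by omega)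
            · have htl2 : t = ℓ := by omega
              rw [if_neg (show ¬ t = 0 by omega), if_neg (show ¬ t ≤ ℓ-2 by omega),
                if_neg (show ¬ t = ℓ-1 by omega)]
              by_cases hs0 : s = 0
              · subst hs0; rw [if_pos rfl]
                exact buoy_ne' hB i 0 (ℓ-1) (by omega) (by omega) b a hmb hma (by omega)
              · by_cases hsl : s = ℓ-1
                · subst hsl
                  rw [if_neg (by omega : ¬ (ℓ-1) = 0), if_neg (by omega : ¬ ℓ-1 ≤ ℓ-2), if_pos rfl]
                  exact buoy_ne' hB i (ℓ-2) (ℓ-1) (by omega) (by omega) d0 a hd0 hma (by omega)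
                · rw [if_neg hs0, if_pos (by omega : s ≤ ℓ-2)]
                  exact buoy_ne' hB i s (ℓ-1) (by omega) (by omega) _ _
                    (hwm s (by omega) (by omega)) hma (by omega)
        · intro t htn
          beta_reduce
          by_cases ht0 : t = 0
          · subst ht0
            rw [if_pos rfl, if_neg (by omega : ¬ (0:ℕ)+1 = 0), if_pos (by omega : (0:ℕ)+1 ≤ ℓ-2)]
            rw [show (0:ℕ)+1 = 1 by rfl, hw1]
            exact hbc'
          · by_cases ht2 : t ≤ ℓ-3
            · rw [if_neg ht0, if_pos (by omega : t ≤ ℓ-2), if_neg (by omega : ¬ t+1 = 0),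
                if_pos (by omega : t+1 ≤ ℓ-2)]
              exact hwadj t (by omega) ht2
            · by_cases ht3 : t = ℓ-2
              · subst ht3
                rw [if_neg ht0, if_pos le_rfl, if_neg (by omega : ¬ (ℓ-2)+1 = 0),
                  if_neg (by omega : ¬ (ℓ-2)+1 ≤ ℓ-2), if_pos (by omega : (ℓ-2)+1 = ℓ-1)]
                exact hB.2.2.1 _ (hwm (ℓ-2) (by omega) le_rfl) hd0 hwdne
              · have ht4 : t = ℓ-1 := by omega
                subst ht4
                rw [if_neg ht0, if_neg (by omega : ¬ ℓ-1 ≤ ℓ-2), if_pos rfl,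
                  if_neg (by omega : ¬ (ℓ-1)+1 = 0), if_neg (by omega : ¬ (ℓ-1)+1 ≤ ℓ-2),
                  if_neg (by omega : ¬ (ℓ-1)+1 = ℓ-1)]
                exact had0.symm
        · beta_reduce
          rw [show ℓ+1-1 = ℓ by omega, if_neg (by omega : ¬ ℓ = 0),
            if_neg (by omega : ¬ ℓ ≤ ℓ-2), if_neg (by omega : ¬ ℓ = ℓ-1), if_pos rfl]
          exact hab
        · intro s t hst htn hts hex
          beta_reduce
          by_cases ht2 : t ≤ ℓ-2
          · rw [if_neg (by omega : ¬ t = 0), if_pos ht2]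
            by_cases hs0 : s = 0
            · subst hs0; rw [if_pos rfl]
              exact buoy_nadj' hB i 0 t (by omega) (by omega) b (w t) hmb
                (hwm t (by omega) ht2) (by omega) (by omega) (by omega)
            · rw [if_neg hs0, if_pos (by omega : s ≤ ℓ-2)]
              exact buoy_nadj' hB i s t (by omega) (by omega) _ _
                (hwm s (by omega) (by omega)) (hwm t (by omega) ht2)
                (by omega) (by omega) (by omega)
          · by_cases htl : t = ℓ-1
            · subst htl
              rw [if_neg (by omega : ¬ (ℓ-1) = 0), if_neg (by omega : ¬ ℓ-1 ≤ ℓ-2), if_pos rfl]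
              by_cases hs0 : s = 0
              · subst hs0; rw [if_pos rfl]
                exact buoy_nadj' hB i 0 (ℓ-2) (by omega) (by omega) b d0 hmb hd0
                  (by omega) (by omega) (by omega)
              · rw [if_neg hs0, if_pos (by omega : s ≤ ℓ-2)]
                by_cases hsl : s = ℓ-3
                · subst hsl; exact hwd
                · exact buoy_nadj' hB i s (ℓ-2) (by omega) (by omega) _ _
                    (hwm s (by omega) (by omega)) hd0 (by omega) (by omega) (by omega)
            · have htl2 : t = ℓ := by omega
              rw [if_neg (show ¬ t = 0 by omega), if_neg (show ¬ t ≤ ℓ-2 by omega),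
                if_neg (show ¬ t = ℓ-1 by omega)]
              have hs0 : ¬ s = 0 := by
                intro h; exact hex ⟨h, by omega⟩
              by_cases hsl : s = ℓ-1
              · omega
              · rw [if_neg hs0, if_pos (by omega : s ≤ ℓ-2)]
                by_cases hsl2 : s = ℓ-2
                · subst hsl2
                  exact fun h => hwa2 h
                · exact buoy_nadj' hB i s (ℓ-1) (by omega) (by omega) _ _
                    (hwm s (by omega) (by omega)) hma (by omega) (by omega) (by omega)
  obtain ⟨kk, hkkm, hkka, hxkk, hwkk⟩ := hKK
  classical
  -- the hole K (as a function k on naturals)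
  set k : ℕ → V := (fun t => if t = 0 then b else if t = ℓ-1 then a
    else if t = ℓ-2 then kk else w t) with hkdef
  have hk0 : k 0 = b := by simp [hkdef]
  have hkw : ∀ t, 1 ≤ t → t ≤ ℓ-3 → k t = w t := by
    intro t h1 h2
    rw [hkdef]
    beta_reduce
    rw [if_neg (by omega : ¬ t = 0), if_neg (by omega : ¬ t = ℓ-1),
      if_neg (by omega : ¬ t = ℓ-2)]
  have hk1 : k 1 = c' := by rw [hkw 1 le_rfl (by omega)]; exact hw1
  have hkl1 : k (ℓ-1) = a := by
    rw [hkdef]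
    beta_reduce
    rw [if_neg (by omega : ¬ ℓ-1 = 0), if_pos rfl]
  have hkl2 : k (ℓ-2) = kk := by
    rw [hkdef]
    beta_reduce
    rw [if_neg (by omega : ¬ ℓ-2 = 0), if_neg (by omega : ¬ ℓ-2 = ℓ-1), if_pos rfl]
  have hkm : ∀ t, t < ℓ → k t ∈ B (i + (t:ℕ)) := by
    intro t ht
    by_cases h0 : t = 0
    · subst h0; rw [hk0]; exact hmb
    · by_cases h1 : t = ℓ-1
      · subst h1; rw [hkl1]; exact hma
      · by_cases h2 : t = ℓ-2
        · subst h2; rw [hkl2]; exact hkkm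
        · rw [hkw t (by omega) (by omega)]; exact hwm t (by omega) (by omega)
  have hkadj : ∀ t, t + 1 < ℓ → G.Adj (k t) (k (t+1)) := by
    intro t ht
    by_cases h0 : t = 0
    · subst h0; rw [hk0, show (0:ℕ)+1 = 1 by rfl, hk1]; exact hbc'
    · by_cases h1 : t = ℓ-3
      · subst h1
        rw [hkw (ℓ-3) (by omega) le_rfl, show ℓ-3+1 = ℓ-2 by omega, hkl2]
        exact hwkk
      · by_cases h2 : t = ℓ-2
        · subst h2
          rw [hkl2, show ℓ-2+1 = ℓ-1 by omega, hkl1]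
          exact hkka
        · rw [hkw t (by omega) (by omega), hkw (t+1) (by omega) (by omega)]
          exact hwadj t (by omega) (by omega)
  have hK : IsHole G ℓ (fun m : ZMod ℓ => k m.val) := by
    refine isHole_mk ℓ (by omega) k ?_ ?_ ?_ ?_
    · intro s t hst htn
      exact buoy_ne' hB i s t (by omega) (by omega) _ _
        (hkm s (by omega)) (hkm t htn) (by omega)
    · exact fun t ht => hkadj t ht
    · rw [hkl1, hk0]; exact hab
    · intro s t hst htn hts hex
      exact buoy_nadj' hB i s t (by omega) (by omega) _ _
        (hkm s (by omega)) (hkm t htn) (by omega) (by omega) (by omega)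
  -- c is adjacent to k 2
  have hck2 : G.Adj c (k 2) := by
    by_contra hck2
    apply hpan
    refine pan_mk2 ℓ (by omega) k hK c ?_ 1 (by omega) ?_ ?_
    · intro t ht
      by_cases h1 : t = 1
      · subst h1; rw [hk1]; exact hcc'
      · exact buoy_ne' hB i 1 t (by omega) ht c (k t) hmc (hkm t ht) (by omega)
    · rw [hk1]; exact hc'c.symm
    · intro t ht hne
      by_cases h0 : t = 0
      · subst h0; rw [hk0]; exact fun h => hbc h.symm
      · by_cases h2 : t = 2
        · subst h2; exact hck2
        · exact buoy_nadj' hB i 1 t (by omega) ht c (k t) hmc (hkm t ht)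
            (by omega) (by omega) (by omega)
  -- the least index s0 ≥ 2 with x adjacent to k s0
  have hPex : ∃ t, 2 ≤ t ∧ G.Adj x (k t) := ⟨ℓ-2, by omega, by rw [hkl2]; exact hxkk⟩
  set s0 := Nat.find hPex with hs0def
  have hs0spec : 2 ≤ s0 ∧ G.Adj x (k s0) := Nat.find_spec hPex
  have hs0le : s0 ≤ ℓ-2 := Nat.find_le ⟨by omega, by rw [hkl2]; exact hxkk⟩
  have hxlow : ∀ t, t < s0 → ¬ G.Adj x (k t) := by
    intro t ht
    by_cases h0 : t = 0
    · subst h0; rw [hk0]; exact hxb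
    · by_cases h1 : t = 1
      · subst h1; rw [hk1]; exact hxc'
      · exact fun h => Nat.find_min hPex ht ⟨by omega, h⟩
  by_cases hstop : s0 = ℓ-2
  · -- no neighbour of x in k[2..ℓ-3] : even (ℓ-1)-hole (c, k 2, ..., k (ℓ-2), x)
    apply heven
    have hxkl2 : G.Adj x (k (ℓ-2)) := by rw [hkl2]; exact hxkk
    refine evenHole_mk (ℓ-1) (by omega) (by rw [Nat.even_iff]; omega)
      (fun t => if t = 0 then c else if t ≤ ℓ-3 then k (t+1) else x) ?_ ?_ ?_ ?_
    · intro s t hst htn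
      beta_reduce
      by_cases ht3 : t ≤ ℓ-3
      · rw [if_neg (show ¬ t = 0 by omega), if_pos ht3]
        by_cases hs00 : s = 0
        · subst hs00; rw [if_pos rfl]
          exact buoy_ne' hB i 1 (t+1) (by omega) (by omega) c _ hmc
            (hkm (t+1) (by omega)) (by omega)
        · rw [if_neg hs00, if_pos (by omega : s ≤ ℓ-3)]
          exact buoy_ne' hB i (s+1) (t+1) (by omega) (by omega) _ _
            (hkm (s+1) (by omega)) (hkm (t+1) (by omega)) (by omega)
      · rw [if_neg (show ¬ t = 0 by omega), if_neg ht3]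
        by_cases hs00 : s = 0
        · subst hs00; rw [if_pos rfl]
          exact (hxneq _ c hmc).symm
        · rw [if_neg hs00, if_pos (by omega : s ≤ ℓ-3)]
          exact (hxneq _ _ (hkm (s+1) (by omega))).symm
    · intro t htn
      beta_reduce
      by_cases h00 : t = 0
      · subst h00
        rw [if_pos rfl, if_neg (show ¬ (0:ℕ)+1 = 0 by omega), if_pos (show (0:ℕ)+1 ≤ ℓ-3 by omega)]
        exact hck2
      · by_cases h01 : t ≤ ℓ-4
        · rw [if_neg h00, if_pos (by omega : t ≤ ℓ-3), if_neg (by omega : ¬ t+1 = 0),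
            if_pos (by omega : t+1 ≤ ℓ-3)]
          exact hkadj (t+1) (by omega)
        · have h02 : t = ℓ-3 := by omega
          rw [if_neg h00, if_pos (by omega : t ≤ ℓ-3), if_neg (by omega : ¬ t+1 = 0),
            if_neg (by omega : ¬ t+1 ≤ ℓ-3), show t+1 = ℓ-2 by omega]
          exact hxkl2.symm
    · beta_reduce
      rw [if_neg (by omega : ¬ ℓ-1-1 = 0), if_neg (by omega : ¬ ℓ-1-1 ≤ ℓ-3), if_pos rfl]
      exact hxc
    · intro s t hst htn hts hex
      beta_reduce
      by_cases ht3 : t ≤ ℓ-3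
      · rw [if_neg (show ¬ t = 0 by omega), if_pos ht3]
        by_cases hs00 : s = 0
        · subst hs00; rw [if_pos rfl]
          exact buoy_nadj' hB i 1 (t+1) (by omega) (by omega) c _ hmc
            (hkm (t+1) (by omega)) (by omega) (by omega) (by omega)
        · rw [if_neg hs00, if_pos (by omega : s ≤ ℓ-3)]
          exact buoy_nadj' hB i (s+1) (t+1) (by omega) (by omega) _ _
            (hkm (s+1) (by omega)) (hkm (t+1) (by omega)) (by omega) (by omega) (by omega)
      · rw [if_neg (show ¬ t = 0 by omega), if_neg ht3]
        have hs00 : ¬ s = 0 := fun h => hex ⟨h, by omega⟩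
        rw [if_neg hs00, if_pos (by omega : s ≤ ℓ-3)]
        exact fun h => hxlow (s+1) (by omega) h.symm
  · -- now s0 ≤ ℓ-3 : build the hole (k 0, ..., k s0, x, a)
    have hs0le3 : s0 ≤ ℓ-3 := by omega
    have hShole : IsHole G (s0+3) (fun m : ZMod (s0+3) =>
        (fun t => if t ≤ s0 then k t else if t = s0+1 then x else a) m.val) := by
      refine isHole_mk (s0+3) (by omega)
        (fun t => if t ≤ s0 then k t else if t = s0+1 then x else a) ?_ ?_ ?_ ?_
      · intro s t hst htn
        beta_reduce
        by_cases ht : t ≤ s0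
        · rw [if_pos ht, if_pos (by omega : s ≤ s0)]
          exact buoy_ne' hB i s t (by omega) (by omega) _ _
            (hkm s (by omega)) (hkm t (by omega)) (by omega)
        · by_cases ht1 : t = s0+1
          · rw [if_neg ht, if_pos ht1, if_pos (by omega : s ≤ s0)]
            exact (hxneq _ _ (hkm s (by omega))).symm
          · rw [if_neg ht, if_neg ht1]
            by_cases hs : s ≤ s0
            · rw [if_pos hs]
              exact buoy_ne' hB i s (ℓ-1) (by omega) (by omega) _ _
                (hkm s (by omega)) hma (by omega)
            · rw [if_neg hs, if_pos (by omega : s = s0+1)]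
              exact hxneq _ a hma
      · intro t htn
        beta_reduce
        by_cases h : t+1 ≤ s0
        · rw [if_pos (by omega : t ≤ s0), if_pos h]
          exact hkadj t (by omega)
        · by_cases h1 : t = s0
          · rw [if_pos (by omega : t ≤ s0), if_neg (by omega : ¬ t+1 ≤ s0),
              if_pos (by omega : t+1 = s0+1)]
            rw [h1]
            exact hs0spec.2.symm
          · rw [if_neg (by omega : ¬ t ≤ s0), if_pos (by omega : t = s0+1),
              if_neg (by omega : ¬ t+1 ≤ s0), if_neg (by omega : ¬ t+1 = s0+1)]
            exact hxa
      · beta_reduce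
        rw [if_neg (by omega : ¬ s0+3-1 ≤ s0), if_neg (by omega : ¬ s0+3-1 = s0+1),
          if_pos (by omega : (0:ℕ) ≤ s0), hk0]
        exact hab
      · intro s t hst htn hts hex
        beta_reduce
        by_cases ht : t ≤ s0
        · rw [if_pos ht, if_pos (by omega : s ≤ s0)]
          exact buoy_nadj' hB i s t (by omega) (by omega) _ _
            (hkm s (by omega)) (hkm t (by omega)) (by omega) (by omega) (by omega)
        · by_cases ht1 : t = s0+1
          · rw [if_neg ht, if_pos ht1, if_pos (by omega : s ≤ s0)]
            exact fun h => hxlow s (by omega) h.symm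
          · have ht2 : t = s0+2 := by omega
            have hs1 : 1 ≤ s := by
              rcases Nat.eq_zero_or_pos s with h | h
              · exact absurd ⟨h, by omega⟩ hex
              · exact h
            rw [if_neg ht, if_neg ht1, if_pos (by omega : s ≤ s0)]
            exact buoy_nadj' hB i s (ℓ-1) (by omega) (by omega) _ _
              (hkm s (by omega)) hma (by omega) (by omega) (by omega)
    by_cases hpar : s0 % 2 = 1
    · -- s0 odd : that hole is even, contradiction
      exact heven ⟨s0+3, _, hShole, by rw [Nat.even_iff]; omega⟩
    · -- s0 even
      by_cases hs0l3 : s0 = ℓ-3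
      · by_cases hl7 : 7 ≤ ℓ
        · -- pan on H with vertex k s0
          apply hpan
          refine pan_mk2 5 (by omega)
            (fun t => if t = 0 then x else if t = 1 then a else if t = 2 then b
              else if t = 3 then c' else c) hH (k s0) ?_ 0 (by omega) ?_ ?_
          · intro t htn
            interval_cases t <;> norm_num <;>
            first
              | exact (hxneq _ _ (hkm s0 (by omega))).symm
              | exact buoy_ne' hB i s0 (ℓ-1) (by omega) (by omega) _ _
                  (hkm s0 (by omega)) hma (by omega)
              | exact buoy_ne' hB i s0 0 (by omega) (by omega) _ _
                  (hkm s0 (by omega)) hmb (by omega)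
              | exact buoy_ne' hB i s0 1 (by omega) (by omega) _ _
                  (hkm s0 (by omega)) hmc' (by omega)
              | exact buoy_ne' hB i s0 1 (by omega) (by omega) _ _
                  (hkm s0 (by omega)) hmc (by omega)
          · norm_num
            exact hs0spec.2.symm
          · intro t htn hne
            interval_cases t <;> try omega
            all_goals norm_num
            all_goals first
              | exact buoy_nadj' hB i s0 (ℓ-1) (by omega) (by omega) _ _
                  (hkm s0 (by omega)) hma (by omega) (by omega) (by omega)
              | exact buoy_nadj' hB i s0 0 (by omega) (by omega) _ _
                  (hkm s0 (by omega)) hmb (by omega) (by omega) (by omega)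
              | exact buoy_nadj' hB i s0 1 (by omega) (by omega) _ _
                  (hkm s0 (by omega)) hmc' (by omega) (by omega) (by omega)
              | exact buoy_nadj' hB i s0 1 (by omega) (by omega) _ _
                  (hkm s0 (by omega)) hmc (by omega) (by omega) (by omega)
        · -- ℓ = 5 (and s0 = 2) : use a vertex b2 ∈ B i adjacent to c
          have hl5 : ℓ = 5 := by omega
          have hs02 : s0 = 2 := by omega
          have hxk2 : G.Adj x (k 2) := by rw [← hs02]; exact hs0spec.2
          obtain ⟨b2, hb20, hcb2⟩ := hB.2.2.2.2.2.1 (i+1) c hc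
          have hb2i : b2 ∈ B i := by
            rw [show i+1-1 = i by ring] at hb20; exact hb20
          have hb2m : b2 ∈ B (i + ((0:ℕ):ZMod ℓ)) := by simpa using hb2i
          have hb2b : b2 ≠ b := by
            intro h
            exact hbc (by rw [← h]; exact hcb2.symm)
          have hbb2 : G.Adj b b2 := hB.2.2.1 i hb hb2i hb2b.symm
          by_cases hA : G.Adj b2 c'
          · by_cases hBB : G.Adj b2 a
            · by_cases hC : G.Adj x b2
              · -- 4-hole (x, b2, c', k 2)
                apply heven
                refine evenHole_mk 4 le_rfl (by decide)
                  (fun t => if t = 0 then x else if t = 1 then b2 else if t = 2 then c' else k 2)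
                  ?_ ?_ ?_ ?_
                · intro s t hst htn
                  interval_cases t <;> interval_cases s <;> norm_num <;>
                  first
                    | exact hxneq _ b2 hb2m
                    | exact hxneq _ c' hmc'
                    | exact hxneq _ _ (hkm 2 (by omega))
                    | exact buoy_ne' hB i 0 1 (by omega) (by omega) b2 c' hb2m hmc' (by omega)
                    | exact buoy_ne' hB i 0 2 (by omega) (by omega) b2 _ hb2m (hkm 2 (by omega)) (by omega)
                    | exact buoy_ne' hB i 1 2 (by omega) (by omega) c' _ hmc' (hkm 2 (by omega)) (by omega)
                · intro t htn
                  have ht : t < 3 := by omega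
                  interval_cases t <;> norm_num <;>
                  first
                    | exact hC
                    | exact hA
                    | exact (hk1 ▸ hkadj 1 (by omega) : G.Adj c' (k 2))
                · norm_num
                  exact hxk2.symm
                · intro s t hst htn hts hex
                  interval_cases t <;> interval_cases s <;> try omega
                  all_goals norm_num
                  all_goals first
                    | exact hxc'
                    | exact buoy_nadj' hB i 0 2 (by omega) (by omega) b2 _ hb2m
                        (hkm 2 (by omega)) (by omega) (by omega) (by omega)
              · -- 4-hole (x, c, b2, a)
                apply heven
                refine evenHole_mk 4 le_rfl (by decide)
                  (fun t => if t = 0 then x else if t = 1 then c else if t = 2 then b2 else a)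
                  ?_ ?_ ?_ ?_
                · intro s t hst htn
                  interval_cases t <;> interval_cases s <;> norm_num <;>
                  first
                    | exact hxneq _ c hmc
                    | exact hxneq _ b2 hb2m
                    | exact hxneq _ a hma
                    | exact buoy_ne' hB i 1 0 (by omega) (by omega) c b2 hmc hb2m (by omega)
                    | exact buoy_ne' hB i 1 (ℓ-1) (by omega) (by omega) c a hmc hma (by omega)
                    | exact buoy_ne' hB i 0 (ℓ-1) (by omega) (by omega) b2 a hb2m hma (by omega)
                · intro t htn
                  have ht : t < 3 := by omega
                  interval_cases t <;> norm_num <;>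
                  first
                    | exact hxc
                    | exact hcb2
                    | exact hBB
                · norm_num
                  exact hxa.symm
                · intro s t hst htn hts hex
                  interval_cases t <;> interval_cases s <;> try omega
                  all_goals norm_num
                  all_goals first
                    | exact hC
                    | exact buoy_nadj' hB i 1 (ℓ-1) (by omega) (by omega) c a hmc hma
                        (by omega) (by omega) (by omega)
            · -- 6-hole (b, a, k 3, k 2, c, b2)
              apply heven
              have hk3 : k 3 = kk := by rw [← hkl2, hl5]
              have hak3 : G.Adj a (k 3) := by rw [hk3]; exact hkka.symm
              have hk3k2 : G.Adj (k 3) (k 2) := (hkadj 2 (by omega)).symm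
              have hk3m : k 3 ∈ B (i + ((3:ℕ):ZMod ℓ)) := hkm 3 (by omega)
              have hk2m : k 2 ∈ B (i + ((2:ℕ):ZMod ℓ)) := hkm 2 (by omega)
              refine evenHole_mk 6 (by omega) (by decide)
                (fun t => if t = 0 then b else if t = 1 then a else if t = 2 then k 3
                  else if t = 3 then k 2 else if t = 4 then c else b2)
                ?_ ?_ ?_ ?_
              · intro s t hst htn
                interval_cases t <;> interval_cases s <;> norm_num <;>
                first
                  | exact buoy_ne' hB i 0 (ℓ-1) (by omega) (by omega) b a hmb hma (by omega)
                  | exact buoy_ne' hB i 0 3 (by omega) (by omega) b _ hmb hk3m (by omega)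
                  | exact buoy_ne' hB i 0 2 (by omega) (by omega) b _ hmb hk2m (by omega)
                  | exact buoy_ne' hB i 0 1 (by omega) (by omega) b c hmb hmc (by omega)
                  | exact hb2b.symm
                  | exact buoy_ne' hB i (ℓ-1) 3 (by omega) (by omega) a _ hma hk3m (by omega)
                  | exact buoy_ne' hB i (ℓ-1) 2 (by omega) (by omega) a _ hma hk2m (by omega)
                  | exact buoy_ne' hB i (ℓ-1) 1 (by omega) (by omega) a c hma hmc (by omega)
                  | exact buoy_ne' hB i (ℓ-1) 0 (by omega) (by omega) a b2 hma hb2m (by omega)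
                  | exact buoy_ne' hB i 3 2 (by omega) (by omega) _ _ hk3m hk2m (by omega)
                  | exact buoy_ne' hB i 3 1 (by omega) (by omega) _ c hk3m hmc (by omega)
                  | exact buoy_ne' hB i 3 0 (by omega) (by omega) _ b2 hk3m hb2m (by omega)
                  | exact buoy_ne' hB i 2 1 (by omega) (by omega) _ c hk2m hmc (by omega)
                  | exact buoy_ne' hB i 2 0 (by omega) (by omega) _ b2 hk2m hb2m (by omega)
                  | exact buoy_ne' hB i 1 0 (by omega) (by omega) c b2 hmc hb2m (by omega)
              · intro t htn
                have ht : t < 5 := by omega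
                interval_cases t <;> norm_num <;>
                first
                  | exact hab.symm
                  | exact hak3
                  | exact hk3k2
                  | exact hck2.symm
                  | exact hcb2
              · norm_num
                exact hbb2.symm
              · intro s t hst htn hts hex
                interval_cases t <;> interval_cases s <;> try omega
                all_goals norm_num
                all_goals first
                  | exact buoy_nadj' hB i 0 3 (by omega) (by omega) b _ hmb hk3m
                      (by omega) (by omega) (by omega)
                  | exact buoy_nadj' hB i 0 2 (by omega) (by omega) b _ hmb hk2m
                      (by omega) (by omega) (by omega)
                  | exact hbc
                  | exact buoy_nadj' hB i (ℓ-1) 2 (by omega) (by omega) a _ hma hk2m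
                      (by omega) (by omega) (by omega)
                  | exact buoy_nadj' hB i (ℓ-1) 1 (by omega) (by omega) a c hma hmc
                      (by omega) (by omega) (by omega)
                  | exact fun h => hBB h.symm
                  | exact buoy_nadj' hB i 3 1 (by omega) (by omega) _ c hk3m hmc
                      (by omega) (by omega) (by omega)
                  | exact buoy_nadj' hB i 3 0 (by omega) (by omega) _ b2 hk3m hb2m
                      (by omega) (by omega) (by omega)
                  | exact buoy_nadj' hB i 2 0 (by omega) (by omega) _ b2 hk2m hb2m
                      (by omega) (by omega) (by omega)
          · -- 4-hole (b, c', c, b2)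
            apply heven
            refine evenHole_mk 4 le_rfl (by decide)
              (fun t => if t = 0 then b else if t = 1 then c' else if t = 2 then c else b2)
              ?_ ?_ ?_ ?_
            · intro s t hst htn
              interval_cases t <;> interval_cases s <;> norm_num <;>
              first
                | exact buoy_ne' hB i 0 1 (by omega) (by omega) b c' hmb hmc' (by omega)
                | exact buoy_ne' hB i 0 1 (by omega) (by omega) b c hmb hmc (by omega)
                | exact hb2b.symm
                | exact hcc'.symm
                | exact buoy_ne' hB i 1 0 (by omega) (by omega) c' b2 hmc' hb2m (by omega)
                | exact buoy_ne' hB i 1 0 (by omega) (by omega) c b2 hmc hb2m (by omega)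
            · intro t htn
              have ht : t < 3 := by omega
              interval_cases t <;> norm_num <;>
              first
                | exact hbc'
                | exact hc'c
                | exact hcb2
            · norm_num
              exact hbb2.symm
            · intro s t hst htn hts hex
              interval_cases t <;> interval_cases s <;> try omega
              all_goals norm_num
              all_goals first
                | exact hbc
                | exact fun h => hA h.symm
      · -- s0 + 1 ≤ ℓ-3
        by_cases hxk1 : G.Adj x (k (s0+1))
        · -- pan on H with vertex k (s0+1)
          apply hpan
          refine pan_mk2 5 (by omega)
            (fun t => if t = 0 then x else if t = 1 then a else if t = 2 then b
              else if t = 3 then c' else c) hH (k (s0+1)) ?_ 0 (by omega) ?_ ?_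
          · intro t htn
            interval_cases t <;> norm_num <;>
            first
              | exact (hxneq _ _ (hkm (s0+1) (by omega))).symm
              | exact buoy_ne' hB i (s0+1) (ℓ-1) (by omega) (by omega) _ _
                  (hkm (s0+1) (by omega)) hma (by omega)
              | exact buoy_ne' hB i (s0+1) 0 (by omega) (by omega) _ _
                  (hkm (s0+1) (by omega)) hmb (by omega)
              | exact buoy_ne' hB i (s0+1) 1 (by omega) (by omega) _ _
                  (hkm (s0+1) (by omega)) hmc' (by omega)
              | exact buoy_ne' hB i (s0+1) 1 (by omega) (by omega) _ _
                  (hkm (s0+1) (by omega)) hmc (by omega)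
          · norm_num
            exact hxk1.symm
          · intro t htn hne
            interval_cases t <;> try omega
            all_goals norm_num
            all_goals first
              | exact buoy_nadj' hB i (s0+1) (ℓ-1) (by omega) (by omega) _ _
                  (hkm (s0+1) (by omega)) hma (by omega) (by omega) (by omega)
              | exact buoy_nadj' hB i (s0+1) 0 (by omega) (by omega) _ _
                  (hkm (s0+1) (by omega)) hmb (by omega) (by omega) (by omega)
              | exact buoy_nadj' hB i (s0+1) 1 (by omega) (by omega) _ _
                  (hkm (s0+1) (by omega)) hmc' (by omega) (by omega) (by omega)
              | exact buoy_nadj' hB i (s0+1) 1 (by omega) (by omega) _ _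
                  (hkm (s0+1) (by omega)) hmc (by omega) (by omega) (by omega)
        · -- pan on the hole (k 0,...,k s0, x, a) with vertex k (s0+1)
          apply hpan
          refine pan_mk2 (s0+3) (by omega)
            (fun t => if t ≤ s0 then k t else if t = s0+1 then x else a)
            hShole (k (s0+1)) ?_ s0 (by omega) ?_ ?_
          · intro t htn
            beta_reduce
            by_cases ht : t ≤ s0
            · rw [if_pos ht]
              exact buoy_ne' hB i (s0+1) t (by omega) (by omega) _ _
                (hkm (s0+1) (by omega)) (hkm t (by omega)) (by omega)
            · by_cases ht1 : t = s0+1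
              · rw [if_neg ht, if_pos ht1]
                exact (hxneq _ _ (hkm (s0+1) (by omega))).symm
              · rw [if_neg ht, if_neg ht1]
                exact buoy_ne' hB i (s0+1) (ℓ-1) (by omega) (by omega) _ _
                  (hkm (s0+1) (by omega)) hma (by omega)
          · beta_reduce
            rw [if_pos le_rfl]
            exact (hkadj s0 (by omega)).symm
          · intro t htn hne
            beta_reduce
            by_cases ht : t ≤ s0
            · rw [if_pos ht]
              exact buoy_nadj' hB i (s0+1) t (by omega) (by omega) _ _
                (hkm (s0+1) (by omega)) (hkm t (by omega)) (by omega) (by omega) (by omega)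
            · by_cases ht1 : t = s0+1
              · rw [if_neg ht, if_pos ht1]
                exact fun h => hxk1 h.symm
              · rw [if_neg ht, if_neg ht1]
                exact buoy_nadj' hB i (s0+1) (ℓ-1) (by omega) (by omega) _ _
                  (hkm (s0+1) (by omega)) hma (by omega) (by omega) (by omega)

theorem stmt_12 {V : Type*} (G : SimpleGraph V)
    (hpan : ¬ HasInducedPan G) (heven : ¬ HasEvenHole G)
    (ℓ : ℕ) (hodd : Odd ℓ) (B : ZMod ℓ → Set V) (hB : IsBuoy G ℓ B)
    (x : V) (hx : x ∉ ⋃ j, B j) (i : ZMod ℓ)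
    (hprev : ∃ b ∈ B (i - 1), G.Adj x b) (hnext : ∃ b ∈ B (i + 1), G.Adj x b) :
    ∀ b ∈ B i, G.Adj x b := by
  intro b hb
  by_contra hxb
  obtain ⟨a, ha, hxa⟩ := hprev
  obtain ⟨c, hc, hxc⟩ := hnext
  by_cases h1 : ∃ a' ∈ B (i-1), G.Adj x a' ∧ G.Adj a' b
  · obtain ⟨a', ha', hxa', hab'⟩ := h1
    exact buoy_main G hpan heven ℓ hodd B hB x hx i b hb hxb a' ha' hxa' hab' c hc hxc
  · by_cases h2 : ∃ c' ∈ B (i+1), G.Adj x c' ∧ G.Adj c' b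
    · obtain ⟨c', hc', hxc', hcb'⟩ := h2
      have hB' := buoy_reflect hB i
      have hx' : x ∉ ⋃ j, (fun j => B (i+i-j)) j := by
        intro h
        obtain ⟨j, hj⟩ := Set.mem_iUnion.1 h
        exact hx (Set.mem_iUnion.2 ⟨i+i-j, hj⟩)
      refine buoy_main G hpan heven ℓ hodd (fun j => B (i+i-j)) hB' x hx' i b ?_ hxb c' ?_ hxc' hcb' a ?_ hxa
      · show b ∈ B (i+i-i)
        rw [show i+i-i = i by ring]; exact hb
      · show c' ∈ B (i+i-(i-1))
        rw [show i+i-(i-1) = i+1 by ring]; exact hc'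
      · show a ∈ B (i+i-(i+1))
        rw [show i+i-(i+1) = i-1 by ring]; exact ha
    · -- neither side: even 6-hole (x, a, a', b, c', c)
      push_neg at h1 h2
      have hl : 5 ≤ ℓ := hB.1
      haveI : NeZero ℓ := ⟨by omega⟩
      have eL1 : ((ℓ-1:ℕ) : ZMod ℓ) = -1 := by
        rw [Nat.cast_sub (by omega : 1 ≤ ℓ), ZMod.natCast_self, Nat.cast_one]; ring
      have hma : a ∈ B (i + ((ℓ-1:ℕ):ZMod ℓ)) := by
        rw [eL1, show i + (-1 : ZMod ℓ) = i - 1 by ring]; exact ha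
      have hmb : b ∈ B (i + ((0:ℕ):ZMod ℓ)) := by simpa using hb
      have hmc : c ∈ B (i + ((1:ℕ):ZMod ℓ)) := by simpa using hc
      have hxneq := buoy_xne hx
      obtain ⟨a', ha', hba'⟩ := hB.2.2.2.2.2.1 i b hb
      obtain ⟨c', hc', hbc'⟩ := hB.2.2.2.2.1 i b hb
      have hma' : a' ∈ B (i + ((ℓ-1:ℕ):ZMod ℓ)) := by
        rw [eL1, show i + (-1 : ZMod ℓ) = i - 1 by ring]; exact ha'
      have hmc' : c' ∈ B (i + ((1:ℕ):ZMod ℓ)) := by simpa using hc'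
      have hxa' : ¬ G.Adj x a' := fun h => h1 a' ha' h hba'.symm
      have hxc'n : ¬ G.Adj x c' := fun h => h2 c' hc' h hbc'.symm
      have hnab : ¬ G.Adj a b := h1 a ha hxa
      have hncb : ¬ G.Adj c b := h2 c hc hxc
      have haa' : a ≠ a' := fun h => hnab (h ▸ hba'.symm)
      have hcc' : c ≠ c' := fun h => hncb (by rw [h]; exact hbc'.symm)
      apply heven
      refine evenHole_mk 6 (by omega) (by decide)
        (fun t => if t = 0 then x else if t = 1 then a else if t = 2 then a'
          else if t = 3 then b else if t = 4 then c' else c)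
        ?_ ?_ ?_ ?_
      · intro s t hst htn
        interval_cases t <;> interval_cases s <;> norm_num <;>
        first
          | exact hxneq _ a hma
          | exact hxneq _ a' hma'
          | exact hxneq _ b hmb
          | exact hxneq _ c' hmc'
          | exact hxneq _ c hmc
          | exact haa'
          | exact hcc'.symm
          | exact buoy_ne' hB i (ℓ-1) 0 (by omega) (by omega) a b hma hmb (by omega)
          | exact buoy_ne' hB i (ℓ-1) 1 (by omega) (by omega) a c' hma hmc' (by omega)
          | exact buoy_ne' hB i (ℓ-1) 1 (by omega) (by omega) a c hma hmc (by omega)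
          | exact buoy_ne' hB i (ℓ-1) 0 (by omega) (by omega) a' b hma' hmb (by omega)
          | exact buoy_ne' hB i (ℓ-1) 1 (by omega) (by omega) a' c' hma' hmc' (by omega)
          | exact buoy_ne' hB i (ℓ-1) 1 (by omega) (by omega) a' c hma' hmc (by omega)
          | exact buoy_ne' hB i 0 1 (by omega) (by omega) b c' hmb hmc' (by omega)
          | exact buoy_ne' hB i 0 1 (by omega) (by omega) b c hmb hmc (by omega)
      · intro t htn
        have ht : t < 5 := by omega
        interval_cases t <;> norm_num <;>
        first
          | exact hxa
          | exact hB.2.2.1 (i-1) ha ha' haa'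
          | exact hba'.symm
          | exact hbc'
          | exact hB.2.2.1 (i+1) hc' hc hcc'.symm
      · norm_num
        exact hxc.symm
      · intro s t hst htn hts hex
        interval_cases t <;> interval_cases s <;> try omega
        all_goals norm_num
        all_goals first
          | exact hxa'
          | exact hxb
          | exact hxc'n
          | exact hnab
          | exact fun h => hncb h.symm
          | exact buoy_nadj' hB i (ℓ-1) 1 (by omega) (by omega) a c' hma hmc'
              (by omega) (by omega) (by omega)
          | exact buoy_nadj' hB i (ℓ-1) 1 (by omega) (by omega) a c hma hmc
              (by omega) (by omega) (by omega)
          | exact buoy_nadj' hB i (ℓ-1) 1 (by omega) (by omega) a' c' hma' hmc'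
              (by omega) (by omega) (by omega)
          | exact buoy_nadj' hB i (ℓ-1) 1 (by omega) (by omega) a' c hma' hmc
              (by omega) (by omega) (by omega)
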